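/- Let N ≥ 1, a > 0 and γ > 1, and let Π(s) = (a/(γ−1))(s^γ − γs) for s ≥ 0, so that Π(s) − Π(1) = (a/(γ−1))(s^γ − γs + γ − 1). For every measurable function ρ : ℝ^N → [0, ∞), the function x ↦ Π(ρ(x)) − Π(1) belongs to L¹(ℝ^N) if and only if (ρ − 1) belongs to the Orlicz space L^γ_2(ℝ^N), i.e. (ρ − 1)·1_{{|ρ − 1| ≤ δ}} ∈ L²(ℝ^N) and (ρ − 1)·1_{{|ρ − 1| ≥ δ}} ∈ L^γ(ℝ^N). -/

import Mathlib

open MeasureTheory Set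

/-- Tangent line bound for convex rpow: `y^p + p y^(p-1) (x-y) ≤ x^p`. -/
lemma tangent_le {p y x : ℝ} (hp : 1 ≤ p) (hy : 0 < y) (hx : 0 ≤ x) :
    y ^ p + p * y ^ (p - 1) * (x - y) ≤ x ^ p := by
  have h := one_add_mul_self_le_rpow_one_add
    (s := x / y - 1) (by rw [le_sub_iff_add_le]; simpa using div_nonneg hx hy.le) hp
  rw [add_sub_cancel] at h
  have hyp : (0:ℝ) < y ^ p := Real.rpow_pos_of_pos hy p
  have hdiv : (x / y) ^ p = x ^ p / y ^ p := Real.div_rpow hx hy.le p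
  rw [hdiv] at h
  have h2 : y ^ p * (1 + p * (x / y - 1)) ≤ x ^ p := by
    rw [mul_comm]
    exact (le_div_iff₀ hyp).mp h
  calc y ^ p + p * y ^ (p - 1) * (x - y)
      = y ^ p * (1 + p * (x / y - 1)) := by
        rw [Real.rpow_sub_one hy.ne']
        field_simp
    _ ≤ x ^ p := h2

lemma tangent_ge {p y x : ℝ} (hp0 : 0 ≤ p) (hp : p ≤ 1) (hy : 0 < y) (hx : 0 ≤ x) :
    x ^ p ≤ y ^ p + p * y ^ (p - 1) * (x - y) := by
  have h := rpow_one_add_le_one_add_mul_self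
    (s := x / y - 1) (by rw [le_sub_iff_add_le]; simpa using div_nonneg hx hy.le) hp0 hp
  rw [add_sub_cancel] at h
  have hyp : (0:ℝ) < y ^ p := Real.rpow_pos_of_pos hy p
  have hdiv : (x / y) ^ p = x ^ p / y ^ p := Real.div_rpow hx hy.le p
  rw [hdiv] at h
  have h2 : x ^ p ≤ y ^ p * (1 + p * (x / y - 1)) := by
    rw [mul_comm]
    exact (div_le_iff₀ hyp).mp h
  calc x ^ p ≤ y ^ p * (1 + p * (x / y - 1)) := h2
    _ = y ^ p + p * y ^ (p - 1) * (x - y) := by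
        rw [Real.rpow_sub_one hy.ne']
        field_simp

/-- Base-monotonicity bounds for rpow with arbitrary real exponent. -/
lemma rpow_base_bounds {q l r u : ℝ} (hl : 0 < l) (hlu : l ≤ u) (hur : u ≤ r) :
    min (l ^ q) (r ^ q) ≤ u ^ q ∧ u ^ q ≤ max (l ^ q) (r ^ q) := by
  rcases le_or_gt 0 q with hq | hq
  · exact ⟨le_trans (min_le_left _ _) (Real.rpow_le_rpow hl.le hlu hq),
      le_trans (Real.rpow_le_rpow (hl.trans_le hlu).le hur hq) (le_max_right _ _)⟩
  · exact ⟨le_trans (min_le_right _ _) (Real.rpow_le_rpow_of_nonpos (hl.trans_le hlu) hur hq.le),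
      le_trans (Real.rpow_le_rpow_of_nonpos hl hlu hq.le) (le_max_left _ _)⟩

/-- Mean value type bounds for `B^q - A^q`. -/
lemma mvt_bounds {q e₁ e₂ A B : ℝ} (hq : 0 < q) (hA : 0 < A) (hAB : A ≤ B)
    (h₁A : e₁ ≤ A ^ (q - 1)) (h₂A : A ^ (q - 1) ≤ e₂)
    (h₁B : e₁ ≤ B ^ (q - 1)) (h₂B : B ^ (q - 1) ≤ e₂) :
    q * e₁ * (B - A) ≤ B ^ q - A ^ q ∧ B ^ q - A ^ q ≤ q * e₂ * (B - A) := by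
  have hB : 0 < B := hA.trans_le hAB
  have hBA : 0 ≤ B - A := sub_nonneg.mpr hAB
  rcases le_or_gt 1 q with h1 | h1
  · have t1 := tangent_le (p := q) (y := A) (x := B) h1 hA hB.le
    have t2 := tangent_le (p := q) (y := B) (x := A) h1 hB hA.le
    constructor
    · nlinarith [mul_le_mul_of_nonneg_right (mul_le_mul_of_nonneg_left h₁A hq.le) hBA]
    · nlinarith [mul_le_mul_of_nonneg_right (mul_le_mul_of_nonneg_left h₂B hq.le) hBA]
  · have t1 := tangent_ge (p := q) (y := B) (x := A) hq.le h1.le hB hA.le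
    have t2 := tangent_ge (p := q) (y := A) (x := B) hq.le h1.le hA hB.le
    constructor
    · nlinarith [mul_le_mul_of_nonneg_right (mul_le_mul_of_nonneg_left h₁B hq.le) hBA]
    · nlinarith [mul_le_mul_of_nonneg_right (mul_le_mul_of_nonneg_left h₂A hq.le) hBA]

/-- Two-sided quadratic bounds for `F(s) = s^γ - γ s + γ - 1` on `[l, r]` around `1`. -/
lemma quad_bounds {γ l r s : ℝ} (hγ : 1 < γ) (hl : 0 < l) (hl1 : l ≤ 1) (h1r : 1 ≤ r)
    (hls : l ≤ s) (hsr : s ≤ r) :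
    γ * (γ - 1) * min (l ^ (γ - 2)) (r ^ (γ - 2)) / 4 * (s - 1) ^ 2
        ≤ s ^ γ - γ * s + γ - 1 ∧
      s ^ γ - γ * s + γ - 1
        ≤ γ * (γ - 1) * max (l ^ (γ - 2)) (r ^ (γ - 2)) * (s - 1) ^ 2 := by
  set e₁ := min (l ^ (γ - 2)) (r ^ (γ - 2)) with he₁
  set e₂ := max (l ^ (γ - 2)) (r ^ (γ - 2)) with he₂
  have hγ1 : (0:ℝ) < γ - 1 := by linarith
  have hs0 : 0 < s := hl.trans_le hls
  have hq : γ - 1 - 1 = γ - 2 := by ring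
  have he : ∀ u, l ≤ u → u ≤ r → e₁ ≤ u ^ (γ - 1 - 1) ∧ u ^ (γ - 1 - 1) ≤ e₂ := by
    intro u h h'
    rw [hq]
    exact rpow_base_bounds hl h h'
  -- upper bound via tangent at s evaluated at 1
  have key : s ^ γ - γ * s + γ - 1 ≤ γ * (s - 1) * (s ^ (γ - 1) - 1) := by
    have t := tangent_le (p := γ) (y := s) (x := 1) hγ.le hs0 zero_le_one
    rw [Real.one_rpow] at t
    nlinarith [t]
  -- midpoint
  set m := (1 + s) / 2 with hm
  have hm0 : 0 < m := by rw [hm]; linarith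
  rcases le_total 1 s with h1s | hs1
  · -- case 1 ≤ s
    have hm1 : 1 ≤ m := by rw [hm]; linarith
    have hms : m ≤ s := by rw [hm]; linarith
    have hmvt := mvt_bounds (q := γ - 1) (e₁ := e₁) (e₂ := e₂) (A := 1) (B := s) hγ1
      one_pos h1s (he 1 hl1 h1r).1 (he 1 hl1 h1r).2 (he s hls hsr).1 (he s hls hsr).2
    rw [Real.one_rpow] at hmvt
    have hmvt2 := mvt_bounds (q := γ - 1) (e₁ := e₁) (e₂ := e₂) (A := 1) (B := m) hγ1
      one_pos hm1 (he 1 hl1 h1r).1 (he 1 hl1 h1r).2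
      (he m (hl1.trans hm1) (hms.trans hsr)).1 (he m (hl1.trans hm1) (hms.trans hsr)).2
    rw [Real.one_rpow] at hmvt2
    have hγ0 : (0:ℝ) < γ := lt_trans one_pos hγ
    constructor
    · -- lower bound
      have t1 := tangent_le (p := γ) (y := m) (x := s) hγ.le hm0 hs0.le
      have t2 := tangent_le (p := γ) (y := 1) (x := m) hγ.le one_pos hm0.le
      rw [Real.one_rpow, Real.one_rpow] at t2
      have h5 : (γ - 1) * e₁ * (m - 1) * (s - m) ≤ (m ^ (γ - 1) - 1) * (s - m) :=
        mul_le_mul_of_nonneg_right hmvt2.1 (by linarith)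
      have hF : γ * ((m ^ (γ - 1) - 1) * (s - m)) ≤ s ^ γ - γ * s + γ - 1 := by
        nlinarith [t1, t2]
      have h7 : γ * ((γ - 1) * e₁ * (m - 1) * (s - m)) ≤ γ * ((m ^ (γ - 1) - 1) * (s - m)) :=
        mul_le_mul_of_nonneg_left h5 hγ0.le
      have h9 : γ * ((γ - 1) * e₁ * (m - 1) * (s - m)) = γ * (γ - 1) * e₁ / 4 * (s - 1) ^ 2 := by
        rw [hm]; ring
      linarith [hF, h7]
    · -- upper bound
      have h6 : γ * (s - 1) * (s ^ (γ - 1) - 1) ≤ γ * (s - 1) * ((γ - 1) * e₂ * (s - 1)) := by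
        apply mul_le_mul_of_nonneg_left hmvt.2
        nlinarith [hγ.le]
      nlinarith [key, h6]
  · -- case s ≤ 1
    have hm1 : m ≤ 1 := by rw [hm]; linarith
    have hms : s ≤ m := by rw [hm]; linarith
    have hmvt := mvt_bounds (q := γ - 1) (e₁ := e₁) (e₂ := e₂) (A := s) (B := 1) hγ1
      hs0 hs1 (he s hls hsr).1 (he s hls hsr).2 (he 1 hl1 h1r).1 (he 1 hl1 h1r).2
    rw [Real.one_rpow] at hmvt
    have hm0' : l ≤ m := hls.trans hms
    have hmvt2 := mvt_bounds (q := γ - 1) (e₁ := e₁) (e₂ := e₂) (A := m) (B := 1) hγ1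
      hm0 hm1 (he m hm0' (hm1.trans h1r)).1 (he m hm0' (hm1.trans h1r)).2
      (he 1 hl1 h1r).1 (he 1 hl1 h1r).2
    rw [Real.one_rpow] at hmvt2
    have hγ0 : (0:ℝ) < γ := lt_trans one_pos hγ
    constructor
    · have t1 := tangent_le (p := γ) (y := m) (x := s) hγ.le hm0 hs0.le
      have t2 := tangent_le (p := γ) (y := 1) (x := m) hγ.le one_pos hm0.le
      rw [Real.one_rpow, Real.one_rpow] at t2
      have h5 : (γ - 1) * e₁ * (1 - m) * (m - s) ≤ (1 - m ^ (γ - 1)) * (m - s) :=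
        mul_le_mul_of_nonneg_right hmvt2.1 (by linarith)
      have hF : γ * ((1 - m ^ (γ - 1)) * (m - s)) ≤ s ^ γ - γ * s + γ - 1 := by
        nlinarith [t1, t2]
      have h7 : γ * ((γ - 1) * e₁ * (1 - m) * (m - s)) ≤ γ * ((1 - m ^ (γ - 1)) * (m - s)) :=
        mul_le_mul_of_nonneg_left h5 hγ0.le
      have h9 : γ * ((γ - 1) * e₁ * (1 - m) * (m - s)) = γ * (γ - 1) * e₁ / 4 * (s - 1) ^ 2 := by
        rw [hm]; ring
      linarith [hF, h7]
    · have h6 : γ * (1 - s) * (1 - s ^ (γ - 1)) ≤ γ * (1 - s) * ((γ - 1) * e₂ * (1 - s)) := by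
        apply mul_le_mul_of_nonneg_left hmvt.2
        nlinarith [hγ.le]
      linarith [key, h6]

set_option maxHeartbeats 2000000 in
/-- Master two-sided comparison of `F(s) = s^γ - γ s + γ - 1` with the Orlicz weight. -/
lemma master_bounds {γ δ : ℝ} (hγ : 1 < γ) (hδ : 0 < δ) :
    ∃ c C : ℝ, 0 < c ∧ 0 < C ∧ ∀ s : ℝ, 0 ≤ s →
      ((|s - 1| ≤ δ → c * |s - 1| ^ (2:ℝ) ≤ s ^ γ - γ * s + γ - 1 ∧
          s ^ γ - γ * s + γ - 1 ≤ C * |s - 1| ^ (2:ℝ)) ∧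
       (δ ≤ |s - 1| → c * |s - 1| ^ γ ≤ s ^ γ - γ * s + γ - 1 ∧
          s ^ γ - γ * s + γ - 1 ≤ C * |s - 1| ^ γ)) := by
  have hγ1 : (0:ℝ) < γ - 1 := by linarith
  have hγ0 : (0:ℝ) < γ := by linarith
  set K : ℝ := max (1 + δ) ((2 * γ) ^ ((γ - 1)⁻¹)) with hK
  have hK1 : 1 + δ ≤ K := le_max_left _ _
  have hK2 : (2 * γ) ^ ((γ - 1)⁻¹) ≤ K := le_max_right _ _
  have hKgt : 1 < K := by linarith
  set e₁s : ℝ := min ((1/2 : ℝ) ^ (γ - 2)) ((1 + δ) ^ (γ - 2)) with he₁s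
  set e₂s : ℝ := max ((1/2 : ℝ) ^ (γ - 2)) ((1 + δ) ^ (γ - 2)) with he₂s
  set e₁o : ℝ := min ((1/2 : ℝ) ^ (γ - 2)) ((1:ℝ) ^ (γ - 2)) with he₁o
  set e₁b : ℝ := min ((1:ℝ) ^ (γ - 2)) (K ^ (γ - 2)) with he₁b
  have he₁s_pos : 0 < e₁s := lt_min (Real.rpow_pos_of_pos (by norm_num) _)
    (Real.rpow_pos_of_pos (by linarith) _)
  have he₁o_pos : 0 < e₁o := lt_min (Real.rpow_pos_of_pos (by norm_num) _)
    (Real.rpow_pos_of_pos one_pos _)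
  have he₁b_pos : 0 < e₁b := lt_min (Real.rpow_pos_of_pos one_pos _)
    (Real.rpow_pos_of_pos (by linarith) _)
  have hKγpos : (0:ℝ) < (K - 1) ^ γ := Real.rpow_pos_of_pos (by linarith) _
  have hδγpos : (0:ℝ) < δ ^ γ := Real.rpow_pos_of_pos hδ _
  set c : ℝ := min (min (γ * (γ - 1) * e₁s / 4) (γ * (γ - 1) * e₁o / 16))
      (min (min (γ * (γ - 1) * e₁o / 16 * δ ^ 2) (γ * (γ - 1) * e₁b / 4 * δ ^ 2 / (K - 1) ^ γ))
        (1/2)) with hc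
  set C : ℝ := max (max (γ * (γ - 1) * e₂s) (4 * γ))
      (max (γ / δ ^ γ) ((1 + 1/δ) ^ γ + (γ - 1) / δ ^ γ)) with hC
  have hcpos : 0 < c := by
    apply lt_min (lt_min (by positivity) (by positivity))
    exact lt_min (lt_min (by positivity) (by positivity)) (by norm_num)
  have hCpos : 0 < C := lt_of_lt_of_le (by positivity) ((le_max_right _ _).trans (le_max_left _ _))
  refine ⟨c, C, hcpos, hCpos, fun s hs0 => ?_⟩
  have habs2 : |s - 1| ^ (2:ℝ) = (s - 1) ^ 2 := by
    rw [show (2:ℝ) = ((2:ℕ):ℝ) by norm_num, Real.rpow_natCast, sq_abs]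
  -- F ≤ γ for s ≤ 1
  have hFle : s ≤ 1 → s ^ γ - γ * s + γ - 1 ≤ γ := by
    intro h1
    have := Real.rpow_le_one hs0 h1 hγ0.le
    nlinarith [mul_nonneg hγ0.le hs0]
  -- F ≥ γ(γ-1)e₁o/16 for s ≤ 1/2
  have hFhalf : s ≤ 1/2 → γ * (γ - 1) * e₁o / 16 ≤ s ^ γ - γ * s + γ - 1 := by
    intro h12
    have t := tangent_le (p := γ) (y := 1/2) (x := s) hγ.le (by norm_num) hs0
    have hhalf := (quad_bounds (γ := γ) (l := 1/2) (r := 1) (s := 1/2) hγ (by norm_num)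
      (by norm_num) le_rfl le_rfl (by norm_num)).1
    have hle1 : ((1:ℝ)/2) ^ (γ - 1) ≤ 1 := Real.rpow_le_one (by norm_num) (by norm_num) hγ1.le
    -- F(s) ≥ F(1/2) + γ((1/2)^(γ-1) - 1)(s - 1/2) ≥ F(1/2)
    have hstep : (1/2:ℝ) ^ γ - γ * (1/2) + γ - 1 ≤ s ^ γ - γ * s + γ - 1 := by
      nlinarith [mul_nonneg hγ0.le (mul_nonneg (by linarith : (0:ℝ) ≤ 1 - (1/2:ℝ) ^ (γ - 1))
        (by linarith : (0:ℝ) ≤ 1/2 - s))]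
    calc γ * (γ - 1) * e₁o / 16 = γ * (γ - 1) * e₁o / 4 * (1/2 - 1) ^ 2 := by ring
      _ ≤ (1/2:ℝ) ^ γ - γ * (1/2) + γ - 1 := hhalf
      _ ≤ _ := hstep
  constructor
  · -- small region
    intro hsmall
    have habs := abs_le.mp hsmall
    rw [habs2]
    rcases le_total s (1/2) with h12 | h12
    · -- s ∈ [0, 1/2]
      have hsq1 : (s - 1) ^ 2 ≤ 1 := by nlinarith
      have hsq4 : (1:ℝ)/4 ≤ (s - 1) ^ 2 := by nlinarith
      constructor
      · calc c * (s - 1) ^ 2 ≤ c * 1 := by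
              exact mul_le_mul_of_nonneg_left hsq1 hcpos.le
          _ = c := mul_one c
          _ ≤ γ * (γ - 1) * e₁o / 16 := (min_le_left _ _).trans (min_le_right _ _)
          _ ≤ _ := hFhalf h12
      · have h4γ : (4 * γ) ≤ C := (le_max_right _ _).trans (le_max_left _ _)
        calc s ^ γ - γ * s + γ - 1 ≤ γ := hFle (by linarith)
          _ = 4 * γ * (1/4) := by ring
          _ ≤ 4 * γ * (s - 1) ^ 2 := mul_le_mul_of_nonneg_left hsq4 (by positivity)
          _ ≤ C * (s - 1) ^ 2 := mul_le_mul_of_nonneg_right h4γ (sq_nonneg _)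
    · -- s ∈ [1/2, 1 + δ]
      have hq := quad_bounds (γ := γ) (l := 1/2) (r := 1 + δ) (s := s) hγ (by norm_num)
        (by norm_num) (by linarith) h12 (by linarith)
      constructor
      · refine le_trans (mul_le_mul_of_nonneg_right ((min_le_left _ _).trans (min_le_left _ _))
          (sq_nonneg _)) ?_
        exact hq.1
      · refine le_trans hq.2 (mul_le_mul_of_nonneg_right
          ((le_max_left _ _).trans (le_max_left _ _)) (sq_nonneg _))
  · -- big region
    intro hbig
    have habsγ_pos : 0 ≤ |s - 1| ^ γ := (Real.rpow_pos_of_pos (lt_of_lt_of_le hδ hbig) γ).le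
    have hδγ_le : δ ^ γ ≤ |s - 1| ^ γ := Real.rpow_le_rpow hδ.le hbig hγ0.le
    rcases le_total s 1 with hs1 | hs1
    · -- s ≤ 1 - δ
      have habs : |s - 1| = 1 - s := by rw [abs_sub_comm]; exact abs_of_nonneg (by linarith)
      rw [habs] at hδγ_le hbig ⊢
      have hδ1 : δ ≤ 1 := by linarith
      have h1sγ : (1 - s) ^ γ ≤ 1 := Real.rpow_le_one (by linarith) (by linarith) hγ0.le
      constructor
      · -- lower
        have hca : γ * (γ - 1) * e₁o / 16 * δ ^ 2 ≤ s ^ γ - γ * s + γ - 1 := by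
          rcases le_total s (1/2) with h12 | h12
          · have hδ2 : δ ^ 2 ≤ 1 := by nlinarith
            have := hFhalf h12
            nlinarith [mul_pos (mul_pos hγ0 hγ1) he₁o_pos]
          · have hq := (quad_bounds (γ := γ) (l := 1/2) (r := 1) (s := s) hγ (by norm_num)
              (by norm_num) le_rfl h12 hs1).1
            have hsq : δ ^ 2 ≤ (s - 1) ^ 2 := by nlinarith
            nlinarith [mul_pos (mul_pos hγ0 hγ1) he₁o_pos,
              mul_le_mul_of_nonneg_left hsq (by positivity : (0:ℝ) ≤ γ * (γ - 1) * e₁o / 4)]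
        calc c * (1 - s) ^ γ ≤ c * 1 := mul_le_mul_of_nonneg_left h1sγ hcpos.le
          _ = c := mul_one c
          _ ≤ γ * (γ - 1) * e₁o / 16 * δ ^ 2 :=
              (min_le_right _ _).trans ((min_le_left _ _).trans (min_le_left _ _))
          _ ≤ _ := hca
      · -- upper
        have hCp : γ / δ ^ γ ≤ C := (le_max_left _ _).trans (le_max_right _ _)
        calc s ^ γ - γ * s + γ - 1 ≤ γ := hFle hs1
          _ = γ / δ ^ γ * δ ^ γ := by field_simp
          _ ≤ γ / δ ^ γ * (1 - s) ^ γ := mul_le_mul_of_nonneg_left hδγ_le (by positivity)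
          _ ≤ C * (1 - s) ^ γ := mul_le_mul_of_nonneg_right hCp
              ((Real.rpow_pos_of_pos (by linarith) γ).le)
    · -- s ≥ 1 + δ
      have habs : |s - 1| = s - 1 := abs_of_nonneg (by linarith)
      rw [habs] at hδγ_le hbig ⊢
      have hs1δ : 1 + δ ≤ s := by linarith
      have hs1pos : (0:ℝ) < s - 1 := by linarith
      constructor
      · -- lower bound
        rcases le_total s K with hsK | hsK
        · have hq := (quad_bounds (γ := γ) (l := 1) (r := K) (s := s) hγ one_pos le_rfl
            hKgt.le (by linarith) hsK).1
          have hsq : δ ^ 2 ≤ (s - 1) ^ 2 := by nlinarith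
          have hcb : γ * (γ - 1) * e₁b / 4 * δ ^ 2 ≤ s ^ γ - γ * s + γ - 1 := by
            nlinarith [mul_le_mul_of_nonneg_left hsq
              (by positivity : (0:ℝ) ≤ γ * (γ - 1) * e₁b / 4)]
          have hKbound : (s - 1) ^ γ ≤ (K - 1) ^ γ :=
            Real.rpow_le_rpow hs1pos.le (by linarith) hγ0.le
          have hcle : c ≤ γ * (γ - 1) * e₁b / 4 * δ ^ 2 / (K - 1) ^ γ :=
            (min_le_right _ _).trans ((min_le_left _ _).trans (min_le_right _ _))
          calc c * (s - 1) ^ γ ≤ γ * (γ - 1) * e₁b / 4 * δ ^ 2 / (K - 1) ^ γ * (K - 1) ^ γ := by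
                apply mul_le_mul hcle hKbound (Real.rpow_pos_of_pos hs1pos γ).le
                positivity
            _ = γ * (γ - 1) * e₁b / 4 * δ ^ 2 := div_mul_cancel₀ _ hKγpos.ne'
            _ ≤ _ := hcb
        · -- s ≥ K
          have hsK1 : (1:ℝ) < s := lt_of_lt_of_le hKgt hsK
          have h2γ : 2 * γ ≤ s ^ (γ - 1) := by
            have h1 : ((2 * γ) ^ ((γ - 1)⁻¹)) ^ (γ - 1) ≤ s ^ (γ - 1) :=
              Real.rpow_le_rpow (Real.rpow_pos_of_pos (by linarith) _).le
                (hK2.trans hsK) hγ1.le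
            rwa [← Real.rpow_mul (by linarith : (0:ℝ) ≤ 2 * γ),
              inv_mul_cancel₀ hγ1.ne', Real.rpow_one] at h1
          have hsplit : s * s ^ (γ - 1) = s ^ γ := by
            have h2 := (Real.rpow_add (show (0:ℝ) < s by linarith) 1 (γ - 1)).symm
            rw [Real.rpow_one] at h2
            rw [h2, show 1 + (γ - 1) = γ by ring]
          have hγs_le : γ * s ≤ s ^ γ / 2 := by
            have h3 := mul_le_mul_of_nonneg_left h2γ
              (show (0:ℝ) ≤ s by linarith)
            rw [hsplit] at h3
            linarith
          have hfinal : (s - 1) ^ γ ≤ s ^ γ :=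
            Real.rpow_le_rpow (by linarith) (by linarith) hγ0.le
          have hc12 : c ≤ 1/2 := (min_le_right _ _).trans (min_le_right _ _)
          calc c * (s - 1) ^ γ ≤ 1/2 * (s - 1) ^ γ :=
                mul_le_mul_of_nonneg_right hc12 (Real.rpow_pos_of_pos hs1pos γ).le
            _ ≤ 1/2 * s ^ γ := mul_le_mul_of_nonneg_left hfinal (by norm_num)
            _ ≤ s ^ γ - γ * s + γ - 1 := by linarith
      · -- upper bound on [1 + δ, ∞)
        have hCp : (1 + 1/δ) ^ γ + (γ - 1) / δ ^ γ ≤ C :=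
          (le_max_right _ _).trans (le_max_right _ _)
        have hmul : s ≤ (1 + 1/δ) * (s - 1) := by
          rw [show (1 + 1/δ) * (s - 1) = s + (s - 1 - δ)/δ by field_simp; ring]
          have := div_nonneg (by linarith : (0:ℝ) ≤ s - 1 - δ) hδ.le
          linarith
        have h1 : s ^ γ ≤ (1 + 1/δ) ^ γ * (s - 1) ^ γ := by
          rw [← Real.mul_rpow (by positivity) hs1pos.le]
          exact Real.rpow_le_rpow hs0 hmul hγ0.le
        have h2 : (γ - 1) ≤ (γ - 1) / δ ^ γ * (s - 1) ^ γ := by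
          have hge1 : (1:ℝ) ≤ ((s - 1)/δ) ^ γ :=
            Real.one_le_rpow (by rw [le_div_iff₀ hδ]; linarith) hγ0.le
          rw [Real.div_rpow hs1pos.le hδ.le] at hge1
          calc (γ - 1) = (γ - 1) * 1 := (mul_one _).symm
            _ ≤ (γ - 1) * ((s - 1) ^ γ / δ ^ γ) := mul_le_mul_of_nonneg_left hge1 hγ1.le
            _ = (γ - 1) / δ ^ γ * (s - 1) ^ γ := by ring
        have hγs : 0 ≤ γ * s := by positivity
        calc s ^ γ - γ * s + γ - 1 ≤ s ^ γ + (γ - 1) := by linarith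
          _ ≤ (1 + 1/δ) ^ γ * (s - 1) ^ γ + (γ - 1) / δ ^ γ * (s - 1) ^ γ := by linarith
          _ = ((1 + 1/δ) ^ γ + (γ - 1) / δ ^ γ) * (s - 1) ^ γ := by ring
          _ ≤ C * (s - 1) ^ γ := mul_le_mul_of_nonneg_right hCp
              (Real.rpow_pos_of_pos hs1pos γ).le

/-- Two nonnegative functions comparable up to positive constants are simultaneously
integrable. -/
lemma integrable_iff_of_two_sided {α : Type*} [MeasurableSpace α] {μ : Measure α}
    {u v : α → ℝ} (hu : AEStronglyMeasurable u μ) (hv : AEStronglyMeasurable v μ)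
    {c C : ℝ} (hc : 0 < c)
    (h : ∀ x, 0 ≤ u x ∧ 0 ≤ v x ∧ c * v x ≤ u x ∧ u x ≤ C * v x) :
    Integrable u μ ↔ Integrable v μ := by
  constructor
  · intro hI
    refine ((hI.const_mul c⁻¹).mono' hv (ae_of_all _ fun x => ?_))
    obtain ⟨hu0, hv0, h1, _⟩ := h x
    rw [Real.norm_eq_abs, abs_of_nonneg hv0]
    calc v x = c⁻¹ * (c * v x) := by field_simp
      _ ≤ c⁻¹ * u x := mul_le_mul_of_nonneg_left h1 (inv_nonneg.mpr hc.le)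
  · intro hI
    refine ((hI.const_mul C).mono' hu (ae_of_all _ fun x => ?_))
    obtain ⟨hu0, _, _, h2⟩ := h x
    rw [Real.norm_eq_abs, abs_of_nonneg hu0]
    exact h2

/-- `Memℒp` of an indicator at exponent `p` is equivalent to integrability of the indicator
of `|f|^p`. -/
lemma memℒp_indicator_iff_integrable {α : Type*} [MeasurableSpace α] {μ : Measure α}
    {f : α → ℝ} {s : Set α} (hf : Measurable f) (hs : MeasurableSet s)
    {p : ℝ} (hp : 0 < p) :
    MemLp (s.indicator f) (ENNReal.ofReal p) μ ↔
      Integrable (s.indicator fun x => |f x| ^ p) μ := by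
  have hmeas : AEStronglyMeasurable (s.indicator f) μ := (hf.indicator hs).aestronglyMeasurable
  have h0 : ENNReal.ofReal p ≠ 0 := by
    simp [ENNReal.ofReal_eq_zero, not_le, hp]
  have htop : ENNReal.ofReal p ≠ ⊤ := ENNReal.ofReal_ne_top
  have hiff := memLp_norm_rpow_iff (p := ENNReal.ofReal p) (q := ENNReal.ofReal p) hmeas h0 htop
  rw [ENNReal.toReal_ofReal hp.le, ENNReal.div_self h0 htop, memLp_one_iff_integrable] at hiff
  rw [← hiff]
  have heq : (fun x => ‖s.indicator f x‖ ^ p) = s.indicator fun x => |f x| ^ p := by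
    funext x
    by_cases hx : x ∈ s
    · rw [Set.indicator_of_mem hx, Set.indicator_of_mem hx, Real.norm_eq_abs]
    · rw [Set.indicator_of_notMem hx, Set.indicator_of_notMem hx, norm_zero,
        Real.zero_rpow hp.ne']
  rw [heq]

set_option maxHeartbeats 1000000 in
/-- For the pressure law `P(z) = a z^γ` with `a > 0`, `γ > 1`, the relative potential
energy `Π(ρ) - Π(1) = (a/(γ-1))(ρ^γ - γρ + γ - 1)` is integrable if and only if
`ρ - 1` belongs to the Orlicz space `L^γ_2(ℝ^N)`. -/
theorem potentialEnergy_integrable_iff_orlicz (N : ℕ) (hN : 1 ≤ N) (a γ : ℝ)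
    (ha : 0 < a) (hγ : 1 < γ) (δ : ℝ) (hδ : 0 < δ)
    (ρ : (Fin N → ℝ) → ℝ) (hρm : Measurable ρ) (hρ0 : ∀ x, 0 ≤ ρ x) :
    Integrable (fun x => (a / (γ - 1)) * ((ρ x) ^ γ - γ * ρ x + γ - 1)) volume ↔
    (MemLp ({x | |ρ x - 1| ≤ δ}.indicator (fun x => ρ x - 1)) (ENNReal.ofReal 2) volume ∧
      MemLp ({x | δ ≤ |ρ x - 1|}.indicator (fun x => ρ x - 1)) (ENNReal.ofReal γ) volume) := by
  have hγ1 : (0:ℝ) < γ - 1 := by linarith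
  have hγ0 : (0:ℝ) < γ := by linarith
  obtain ⟨c, C, hc, hC, hcomp⟩ := master_bounds hγ hδ
  set A : Set (Fin N → ℝ) := {x | |ρ x - 1| ≤ δ} with hA
  set B : Set (Fin N → ℝ) := {x | δ ≤ |ρ x - 1|} with hB
  have hfm : Measurable fun x : Fin N → ℝ => ρ x - 1 := hρm.sub measurable_const
  have hGm : Measurable fun x : Fin N → ℝ => ρ x ^ γ - γ * ρ x + γ - 1 := by measurability
  have hAm : MeasurableSet A := measurableSet_le hfm.abs measurable_const
  have hBm : MeasurableSet B := measurableSet_le measurable_const hfm.abs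
  have hG0 : ∀ x, 0 ≤ ρ x ^ γ - γ * ρ x + γ - 1 := by
    intro x
    have t := tangent_le (p := γ) (y := 1) (x := ρ x) hγ.le one_pos (hρ0 x)
    rw [Real.one_rpow, Real.one_rpow] at t
    nlinarith [t]
  rw [integrable_const_mul_iff
    (isUnit_iff_ne_zero.mpr (ne_of_gt (by positivity : (0:ℝ) < a / (γ - 1))))]
  rw [memℒp_indicator_iff_integrable hfm hAm (by norm_num : (0:ℝ) < 2),
    memℒp_indicator_iff_integrable hfm hBm hγ0]
  have hGA : AEStronglyMeasurable
      (A.indicator fun x => ρ x ^ γ - γ * ρ x + γ - 1) volume :=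
    (hGm.indicator hAm).aestronglyMeasurable
  have hGB : AEStronglyMeasurable
      (B.indicator fun x => ρ x ^ γ - γ * ρ x + γ - 1) volume :=
    (hGm.indicator hBm).aestronglyMeasurable
  have hv2m : Measurable fun x : Fin N → ℝ => |ρ x - 1| ^ (2:ℝ) := by measurability
  have hvγm : Measurable fun x : Fin N → ℝ => |ρ x - 1| ^ γ := by measurability
  have hiffA : Integrable (A.indicator fun x => ρ x ^ γ - γ * ρ x + γ - 1) volume ↔
      Integrable (A.indicator fun x => |ρ x - 1| ^ (2:ℝ)) volume := by
    apply integrable_iff_of_two_sided hGA ((hv2m.indicator hAm).aestronglyMeasurable) hc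
    intro x
    by_cases hx : x ∈ A
    · rw [Set.indicator_of_mem hx, Set.indicator_of_mem hx]
      obtain ⟨h1, h2⟩ := ((hcomp (ρ x) (hρ0 x)).1) hx
      exact ⟨hG0 x, by positivity, h1, h2⟩
    · rw [Set.indicator_of_notMem hx, Set.indicator_of_notMem hx]
      exact ⟨le_rfl, le_rfl, by simp, by simp⟩
  have hiffB : Integrable (B.indicator fun x => ρ x ^ γ - γ * ρ x + γ - 1) volume ↔
      Integrable (B.indicator fun x => |ρ x - 1| ^ γ) volume := by
    apply integrable_iff_of_two_sided hGB ((hvγm.indicator hBm).aestronglyMeasurable) hc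
    intro x
    by_cases hx : x ∈ B
    · rw [Set.indicator_of_mem hx, Set.indicator_of_mem hx]
      obtain ⟨h1, h2⟩ := ((hcomp (ρ x) (hρ0 x)).2) hx
      exact ⟨hG0 x, by positivity, h1, h2⟩
    · rw [Set.indicator_of_notMem hx, Set.indicator_of_notMem hx]
      exact ⟨le_rfl, le_rfl, by simp, by simp⟩
  rw [← hiffA, ← hiffB]
  constructor
  · exact fun h => ⟨h.indicator hAm, h.indicator hBm⟩
  · rintro ⟨h1, h2⟩
    refine (h1.add h2).mono' hGm.aestronglyMeasurable (ae_of_all _ fun x => ?_)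
    rw [Real.norm_eq_abs, abs_of_nonneg (hG0 x)]
    by_cases hx : x ∈ A
    · have e2 : 0 ≤ B.indicator (fun x => ρ x ^ γ - γ * ρ x + γ - 1) x :=
        Set.indicator_nonneg (fun y _ => hG0 y) x
      rw [Pi.add_apply, Set.indicator_of_mem hx]
      linarith
    · have hxB : x ∈ B := by
        have hx' : ¬ |ρ x - 1| ≤ δ := hx
        exact le_of_lt (not_le.mp hx')
      have e2 : 0 ≤ A.indicator (fun x => ρ x ^ γ - γ * ρ x + γ - 1) x :=
        Set.indicator_nonneg (fun y _ => hG0 y) x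
      rw [Pi.add_apply, Set.indicator_of_mem hxB]
      linarith
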